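/- Let ρ be a symmetric positive definite real matrix indexed by {1,…,d+1} with unit diagonal, let j* ∈ {1,…,d+1}, let m be an integer with j* ≤ m ≤ d, and let τ be an integer with 1 ≤ τ ≤ d+1−m. Assume (i) the block structure ρ_{kl} = 0 for all k ≤ m < l ≤ d+1, and (ii) the truncation condition: for every j ∈ {2,…,d+1−τ} and every k ∈ {1,…,j−1}, ρ_{kj} = ρ_{S_j,k}ᵀ ρ_{S_j,S_j}⁻¹ ρ_{S_j,j}, where S_j = {j+1,…,d+1}. Then the regression coefficient vector β = ρ_{−j*,−j*}⁻¹ ρ_{−j*,j*} is the zero vector. -/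
import Mathlib


open Matrix

/-- The algebraic truncation condition of a Gaussian C-vine at level `τ` with variable order
`1,…,d+1` (variables are indexed by `Fin (d+1)`, index `i` standing for variable `i+1`):
for every `j ∈ {2,…,d+1−τ}` and every `k ∈ {1,…,j−1}`,
`ρ_{kj} = ρ_{S_j,k}ᵀ ρ_{S_j,S_j}⁻¹ ρ_{S_j,j}` where `S_j = {j+1,…,d+1}`. -/
def TruncCond (d τ : ℕ) (ρ : Matrix (Fin (d+1)) (Fin (d+1)) ℝ) : Prop :=
  ∀ j : Fin (d+1), 1 ≤ (j : ℕ) → (j : ℕ) + τ ≤ d →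
    ∀ k : Fin (d+1), (k : ℕ) < (j : ℕ) →
      ρ k j =
        (fun a : {l : Fin (d+1) // (j : ℕ) < (l : ℕ)} => ρ a.1 k) ⬝ᵥ
          ((ρ.submatrix (fun a : {l : Fin (d+1) // (j : ℕ) < (l : ℕ)} => a.1)
              (fun a : {l : Fin (d+1) // (j : ℕ) < (l : ℕ)} => a.1))⁻¹).mulVec
            (fun a => ρ a.1 j)

/-- Let `ρ` be symmetric positive definite with unit diagonal, `j*` an index,
`j* ≤ m ≤ d`, `1 ≤ τ ≤ d+1−m`. Assume (i) the block structure `ρ_{kl} = 0` for all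
`k ≤ m < l ≤ d+1`, and (ii) the truncation condition. Then the regression coefficient
vector `β = ρ_{−j*,−j*}⁻¹ ρ_{−j*,j*}` is the zero vector. -/
theorem stmt_7 (d : ℕ) (ρ : Matrix (Fin (d+1)) (Fin (d+1)) ℝ) (hρ : ρ.PosDef)
    (hdiag : ∀ a, ρ a a = 1)
    (j : Fin (d+1)) (m : ℕ) (hjm : (j : ℕ) < m) (hmd : m ≤ d)
    (τ : ℕ) (hτ1 : 1 ≤ τ) (hτ2 : τ + m ≤ d + 1)
    (hblock : ∀ k l : Fin (d+1), (k : ℕ) < m → m ≤ (l : ℕ) → ρ k l = 0)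
    (htrunc : TruncCond d τ ρ) :
    ((ρ.submatrix (fun k : {k : Fin (d+1) // k ≠ j} => k.1)
        (fun k : {k : Fin (d+1) // k ≠ j} => k.1))⁻¹).mulVec
      (fun k => ρ k.1 j) = 0 := by
  have hsym : ∀ a b : Fin (d+1), ρ a b = ρ b a := by
    intro a b
    have := hρ.isHermitian
    rw [Matrix.IsHermitian] at this
    conv_lhs => rw [← this]
    simp [Matrix.conjTranspose_apply]
  have key : ∀ n, ∀ b : Fin (d+1), m - (b : ℕ) ≤ n → (b : ℕ) < m →
      ∀ a : Fin (d+1), (a : ℕ) < (b : ℕ) → ρ a b = 0 := by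
    intro n
    induction n with
    | zero => intro b hb hbm; omega
    | succ n ih =>
      intro b hb hbm a hab
      rw [htrunc b (by omega) (by omega) a hab]
      have hS : (fun l : {l : Fin (d+1) // (b : ℕ) < (l : ℕ)} => ρ l.1 b) = 0 := by
        funext l
        show ρ l.1 b = 0
        rcases lt_or_ge (l.1 : ℕ) m with h | h
        · rw [hsym]; exact ih l.1 (by omega) h b l.2
        · rw [hsym]; exact hblock b l.1 hbm h
      rw [hS, Matrix.mulVec_zero, dotProduct_zero]
  have hv : (fun k : {k : Fin (d+1) // k ≠ j} => ρ k.1 j) = 0 := by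
    funext k
    show ρ k.1 j = 0
    have hne : (k.1 : ℕ) ≠ (j : ℕ) := fun h => k.2 (Fin.ext h)
    rcases lt_or_ge (k.1 : ℕ) (j : ℕ) with h | h
    · exact key m j (by omega) hjm k.1 h
    · have hkj : (j : ℕ) < (k.1 : ℕ) := lt_of_le_of_ne h (Ne.symm hne)
      rcases lt_or_ge (k.1 : ℕ) m with h2 | h2
      · rw [hsym]; exact key m k.1 (by omega) h2 j hkj
      · rw [hsym]; exact hblock j k.1 hjm h2
  rw [hv, Matrix.mulVec_zero]
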